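/- Let D ⊂ GF(q) and suppose C_D has dimension m and max nonzero codeword weight strictly less than (p-1)p^{m-1}. Then C_{D̄}, where D̄ = GF(q) \ D, also has dimension m, length q - |D|, and for each x ∈ GF(q)*, the weight of the codeword in C_{D̄} equals (p-1)p^{m-1} minus the weight of the codeword c_x in C_D. -/

import Mathlib

open Finset

theorem key (p m : ℕ) [Fact p.Prime] (hm : 0 < m)
    (F : Type) [Field F] [Fintype F] [DecidableEq F] [Algebra (ZMod p) F]
    (hcard : Fintype.card F = p ^ m) (x : F) (hx : x ≠ 0) :
    (univ.filter fun d : F => Algebra.trace (ZMod p) F (x * d) ≠ 0).card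
      = (p - 1) * p ^ (m - 1) := by
  have hp := (Fact.out : p.Prime)
  haveI : FiniteDimensional (ZMod p) F := Module.Finite.of_finite
  haveI : Algebra.IsSeparable (ZMod p) F := inferInstance
  set L : F →ₗ[ZMod p] ZMod p :=
    (Algebra.trace (ZMod p) F) ∘ₗ (LinearMap.mulLeft (ZMod p) x) with hL
  have hsurj : Function.Surjective L := by
    apply Function.Surjective.comp (Algebra.trace_surjective (ZMod p) F)
    intro y
    exact ⟨x⁻¹ * y, by simp [LinearMap.mulLeft_apply, hx]⟩
  have hfr : Module.finrank (ZMod p) F = m := by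
    have := Module.card_eq_pow_finrank (K := ZMod p) (V := F)
    rw [ZMod.card, hcard] at this
    exact (Nat.pow_right_injective hp.two_le this.symm)
  have hker : Module.finrank (ZMod p) (LinearMap.ker L) = m - 1 := by
    have h1 := LinearMap.finrank_range_add_finrank_ker L
    rw [hfr] at h1
    have h2 : Module.finrank (ZMod p) (LinearMap.range L) = 1 := by
      rw [LinearMap.range_eq_top.mpr hsurj]
      simpa using Module.finrank_self (ZMod p)
    omega
  haveI : Fintype (LinearMap.ker L) := Fintype.ofFinite _
  have hcardker : Fintype.card (LinearMap.ker L) = p ^ (m - 1) := by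
    rw [Module.card_eq_pow_finrank (K := ZMod p) (V := LinearMap.ker L), ZMod.card, hker]
  have hfilter : (univ.filter fun d : F => ¬ (L d ≠ 0)).card = p ^ (m - 1) := by
    rw [← hcardker, ← Fintype.card_subtype]
    apply Fintype.card_congr
    exact Equiv.subtypeEquivRight (fun d => by simp [LinearMap.mem_ker])
  have := card_filter_add_card_filter_not
    (s := (univ : Finset F)) (p := fun d : F => L d ≠ 0)
  rw [card_univ, hcard, hfilter] at this
  have heq : (univ.filter fun d : F => Algebra.trace (ZMod p) F (x * d) ≠ 0)
      = univ.filter fun d : F => L d ≠ 0 := by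
    apply filter_congr; intro d _; simp [hL, LinearMap.mulLeft_apply]
  rw [heq]
  have hm1 : p ^ m = p ^ (m-1) * p := by
    rw [← pow_succ]; congr 1; omega
  have : (univ.filter fun d : F => L d ≠ 0).card = p ^ m - p ^ (m-1) := by omega
  rw [this, hm1, Nat.sub_one_mul, mul_comm]

theorem stmt6 (p m : ℕ) [Fact p.Prime] (hm : 0 < m)
    (F : Type) [Field F] [Fintype F] [DecidableEq F] [Algebra (ZMod p) F]
    (hcard : Fintype.card F = p ^ m)
    (D : Finset F)
    (hdim : Function.Injective
      (fun x : F => fun d : D => Algebra.trace (ZMod p) F (x * d.1)))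
    (hmax : ∀ x : F, x ≠ 0 →
      (D.filter fun d => Algebra.trace (ZMod p) F (x * d) ≠ 0).card
        < (p - 1) * p ^ (m - 1)) :
    Dᶜ.card = p ^ m - D.card ∧
    Function.Injective
      (fun x : F => fun d : (Dᶜ : Finset F) => Algebra.trace (ZMod p) F (x * d.1)) ∧
    ∀ x : F, x ≠ 0 →
      (Dᶜ.filter fun d => Algebra.trace (ZMod p) F (x * d) ≠ 0).card
        = (p - 1) * p ^ (m - 1)
          - (D.filter fun d => Algebra.trace (ZMod p) F (x * d) ≠ 0).card := by
  have hsplit : ∀ x : F,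
      (D.filter fun d => Algebra.trace (ZMod p) F (x * d) ≠ 0).card
      + (Dᶜ.filter fun d => Algebra.trace (ZMod p) F (x * d) ≠ 0).card
      = (univ.filter fun d : F => Algebra.trace (ZMod p) F (x * d) ≠ 0).card := by
    intro x
    rw [← card_union_of_disjoint (disjoint_filter_filter (disjoint_compl_right))]
    congr 1
    rw [← filter_union, union_compl]
  refine ⟨?_, ?_, ?_⟩
  · rw [card_compl, hcard]
  · intro x y hxy
    by_contra hne
    have hz : x - y ≠ 0 := sub_ne_zero.mpr hne
    have h0 : (Dᶜ.filter fun d => Algebra.trace (ZMod p) F ((x - y) * d) ≠ 0).card = 0 := by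
      rw [card_eq_zero, filter_eq_empty_iff]
      intro d hd
      have := congrFun hxy ⟨d, hd⟩
      simp only [not_not, sub_mul, map_sub]
      simp only at this
      rw [this]; ring
    have := hsplit (x - y)
    rw [h0, key p m hm F hcard (x - y) hz, add_zero] at this
    exact absurd this (Nat.ne_of_lt (hmax (x - y) hz))
  · intro x hx
    have := hsplit x
    rw [key p m hm F hcard x hx] at this
    omega
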